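/- Let Λ be a strongly connected finite k-graph, suppose m, n ∈ ℕ^k satisfy m − n ∈ Per Λ, and let μ ∈ Λ^m. Then θ_{d(α)+m, d(α)+n}(αμ) = α·θ_{m,n}(μ) for all α ∈ Λ with s(α) = r(μ), and θ_{m+d(β), n+d(β)}(μβ) = θ_{m,n}(μ)·β for all β ∈ Λ with r(β) = s(μ). -/

import Mathlib

/-- A higher-rank graph (`k`-graph): a countable category with a degree functor
`d : Λ → ℕ^k` satisfying the unique factorisation property.  Morphisms are called
paths; the vertices are the paths of degree `0` (the identity morphisms).
`r` and `s` are the codomain (range) and domain (source) maps.  By convention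
`Λ^{e_i} ≠ ∅` for each standard generator `e_i` of `ℕ^k`. -/
structure KGraph (k : ℕ) where
  Path : Type
  countable : Countable Path
  d : Path → Fin k → ℕ
  r : Path → Path
  s : Path → Path
  d_r : ∀ lam, d (r lam) = 0
  d_s : ∀ lam, d (s lam) = 0
  r_vertex : ∀ v, d v = 0 → r v = v
  s_vertex : ∀ v, d v = 0 → s v = v
  comp : ∀ μ ν : Path, s μ = r ν → Path
  r_comp : ∀ μ ν h, r (comp μ ν h) = r μ
  s_comp : ∀ μ ν h, s (comp μ ν h) = s ν
  d_comp : ∀ μ ν h, d (comp μ ν h) = d μ + d ν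
  id_comp : ∀ lam (h : s (r lam) = r lam), comp (r lam) lam h = lam
  comp_id : ∀ lam (h : s lam = r (s lam)), comp lam (s lam) h = lam
  assoc : ∀ μ ν τ (h1 : s μ = r ν) (h2 : s ν = r τ)
      (h3 : s (comp μ ν h1) = r τ) (h4 : s μ = r (comp ν τ h2)),
      comp (comp μ ν h1) τ h3 = comp μ (comp ν τ h2) h4
  factor : ∀ (lam : Path) (m n : Fin k → ℕ), d lam = m + n →
      ∃! μν : Path × Path, ∃ h : s μν.1 = r μν.2,
        d μν.1 = m ∧ d μν.2 = n ∧ comp μν.1 μν.2 h = lam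
  edge_nonempty : ∀ i : Fin k, ∃ lam, d lam = Pi.single i 1

namespace KGraph

variable {k : ℕ}

/-- The vertices of a `k`-graph: the paths of degree `0`. -/
abbrev Vertex (Λ : KGraph k) : Type := {v : Λ.Path // Λ.d v = 0}

/-- A `k`-graph is finite if `Λ^n` is finite for every `n ∈ ℕ^k`. -/
def IsFinite (Λ : KGraph k) : Prop := ∀ n : Fin k → ℕ, {lam : Λ.Path | Λ.d lam = n}.Finite

/-- A `k`-graph is strongly connected if `vΛw ≠ ∅` for all vertices `v, w`. -/
def StronglyConnected (Λ : KGraph k) : Prop :=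
  ∀ v w : Λ.Path, Λ.d v = 0 → Λ.d w = 0 → ∃ lam : Λ.Path, Λ.r lam = v ∧ Λ.s lam = w

/-- `Λ^min(μ,ν) = {(α,β) : μα = νβ, d(μα) = d(μ) ∨ d(ν)}`. -/
def minSet (Λ : KGraph k) (μ ν : Λ.Path) : Set (Λ.Path × Λ.Path) :=
  {p | ∃ (h1 : Λ.s μ = Λ.r p.1) (h2 : Λ.s ν = Λ.r p.2),
      Λ.comp μ p.1 h1 = Λ.comp ν p.2 h2 ∧ Λ.d μ + Λ.d p.1 = Λ.d μ ⊔ Λ.d ν}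

end KGraph

/-- An infinite path in a `k`-graph `Λ`: a degree-preserving functor `x : Ω_k → Λ`,
recorded by its values `x(m,n)` for `m ≤ n` in `ℕ^k`. -/
structure InfinitePath {k : ℕ} (Λ : KGraph k) where
  toFun : ∀ m n : Fin k → ℕ, m ≤ n → Λ.Path
  d_eq : ∀ m n h, Λ.d (toFun m n h) = n - m
  src : ∀ m n h, Λ.s (toFun m n h) = toFun n n le_rfl
  rng : ∀ m n h, Λ.r (toFun m n h) = toFun m m le_rfl
  comp_eq : ∀ m n p (h1 : m ≤ n) (h2 : n ≤ p)
      (hc : Λ.s (toFun m n h1) = Λ.r (toFun n p h2)),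
      Λ.comp (toFun m n h1) (toFun n p h2) hc = toFun m p (h1.trans h2)

namespace InfinitePath

variable {k : ℕ} {Λ : KGraph k}

/-- The shift map `σ^n` on the infinite-path space, `σ^n(x)(p,q) = x(n+p, n+q)`. -/
def shift (x : InfinitePath Λ) (n : Fin k → ℕ) : InfinitePath Λ where
  toFun p q h := x.toFun (n + p) (n + q) (add_le_add le_rfl h)
  d_eq p q h := by
    rw [x.d_eq]
    funext i
    exact Nat.add_sub_add_left (n i) (q i) (p i)
  src p q h := x.src _ _ _
  rng p q h := x.rng _ _ _
  comp_eq p q t h1 h2 hc := x.comp_eq _ _ _ _ _ hc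

/-- The range `r(x) = x(0,0)` of an infinite path. -/
def range (x : InfinitePath Λ) : Λ.Path := x.toFun 0 0 le_rfl

end InfinitePath

/-- `ExtEq Λ lam y x` says that `y = lam · x`, i.e. `y(0, d(lam)) = lam` and
`σ^{d(lam)}(y) = x`.  (Such an extension is unique when it exists.) -/
def KGraph.ExtEq {k : ℕ} (Λ : KGraph k) (lam : Λ.Path) (y x : InfinitePath Λ) : Prop :=
  y.toFun 0 (Λ.d lam) zero_le = lam ∧ y.shift (Λ.d lam) = x

/-- `Λ.IsTheta m n μ ν` says that `μ ∈ Λ^m`, `ν ∈ Λ^n`, and `μx = νx` for every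
infinite path `x ∈ Z(s(μ))`; i.e. `ν = θ_{m,n}(μ)`. -/
def KGraph.IsTheta {k : ℕ} (Λ : KGraph k) (m n : Fin k → ℕ) (μ ν : Λ.Path) : Prop :=
  Λ.d μ = m ∧ Λ.d ν = n ∧
    ∀ x : InfinitePath Λ, x.range = Λ.s μ →
      ∃ y : InfinitePath Λ, Λ.ExtEq μ y x ∧ Λ.ExtEq ν y x

/-- The periodicity group `Per Λ = {m − n : σ^m(x) = σ^n(x) for all x ∈ Λ^∞} ⊆ ℤ^k`. -/
def KGraph.Per {k : ℕ} (Λ : KGraph k) : Set (Fin k → ℤ) :=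
  {g | ∃ m n : Fin k → ℕ, (∀ i, (m i : ℤ) - n i = g i) ∧
      ∀ x : InfinitePath Λ, x.shift m = x.shift n}

/-- `Λ` is aperiodic if every vertex `v` admits `x ∈ Z(v)` with
`σ^m(x) ≠ σ^n(x)` for all `m ≠ n` in `ℕ^k`. -/
def KGraph.Aperiodic {k : ℕ} (Λ : KGraph k) : Prop :=
  ∀ v : Λ.Path, Λ.d v = 0 → ∃ x : InfinitePath Λ, x.range = v ∧
    ∀ m n : Fin k → ℕ, m ≠ n → x.shift m ≠ x.shift n

section ThetaAux

namespace InfinitePath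

variable {k : ℕ} {Λ : KGraph k}

theorem toFun_congr (x : InfinitePath Λ) {m n m' n' : Fin k → ℕ} (hm : m = m') (hn : n = n')
    (h : m ≤ n) (h' : m' ≤ n') : x.toFun m n h = x.toFun m' n' h' := by
  subst hm; subst hn; rfl

theorem ext' {x y : InfinitePath Λ} (h : x.toFun = y.toFun) : x = y := by
  cases x; cases y; cases h; rfl

theorem shift_shift (x : InfinitePath Λ) (a b : Fin k → ℕ) :
    (x.shift a).shift b = x.shift (a + b) := by
  apply ext'
  funext p q h
  exact x.toFun_congr (by rw [add_assoc]) (by rw [add_assoc]) _ _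

end InfinitePath

namespace KGraph

variable {k : ℕ}

theorem comp_congr (Λ : KGraph k) {μ ν μ' ν' : Λ.Path} (hμ : μ = μ') (hν : ν = ν')
    (h : Λ.s μ = Λ.r ν) (h' : Λ.s μ' = Λ.r ν') :
    Λ.comp μ ν h = Λ.comp μ' ν' h' := by subst hμ; subst hν; rfl

theorem vertex_comp (Λ : KGraph k) {v μ : Λ.Path} (hv : Λ.d v = 0) (h : Λ.s v = Λ.r μ) :
    Λ.comp v μ h = μ := by
  have hv' : v = Λ.r μ := (Λ.s_vertex v hv).symm.trans h
  have h'' : Λ.s (Λ.r μ) = Λ.r μ := Λ.s_vertex _ (Λ.d_r μ)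
  exact (Λ.comp_congr hv' rfl h h'').trans (Λ.id_comp μ h'')

theorem comp_vertex (Λ : KGraph k) {μ v : Λ.Path} (hv : Λ.d v = 0) (h : Λ.s μ = Λ.r v) :
    Λ.comp μ v h = μ := by
  have hv' : v = Λ.s μ := (Λ.r_vertex v hv).symm.trans h.symm
  have h'' : Λ.s μ = Λ.r (Λ.s μ) := (Λ.r_vertex _ (Λ.d_s μ)).symm
  exact (Λ.comp_congr rfl hv' h h'').trans (Λ.comp_id μ h'')

/-- `split Λ lam a` is the unique factorisation of `lam` into a path of degree `a`
followed by a path of degree `d lam - a`. -/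
noncomputable def split (Λ : KGraph k) (lam : Λ.Path) (a : Fin k → ℕ) (ha : a ≤ Λ.d lam) :
    Λ.Path × Λ.Path :=
  (Λ.factor lam a (Λ.d lam - a) (funext fun i => (Nat.add_sub_cancel' (ha i)).symm)).choose

theorem split_spec (Λ : KGraph k) (lam : Λ.Path) (a : Fin k → ℕ) (ha : a ≤ Λ.d lam) :
    ∃ h : Λ.s (Λ.split lam a ha).1 = Λ.r (Λ.split lam a ha).2,
      Λ.d (Λ.split lam a ha).1 = a ∧ Λ.d (Λ.split lam a ha).2 = Λ.d lam - a ∧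
        Λ.comp (Λ.split lam a ha).1 (Λ.split lam a ha).2 h = lam := by
  unfold split
  exact (Λ.factor lam a (Λ.d lam - a)
    (funext fun i => (Nat.add_sub_cancel' (ha i)).symm)).choose_spec.1

theorem split_unique (Λ : KGraph k) {lam : Λ.Path} (a : Fin k → ℕ) (ha : a ≤ Λ.d lam)
    {μ ν : Λ.Path} (h : Λ.s μ = Λ.r ν) (hdμ : Λ.d μ = a) (hc : Λ.comp μ ν h = lam) :
    (μ, ν) = Λ.split lam a ha := by
  unfold split
  refine (Λ.factor lam a (Λ.d lam - a)
    (funext fun i => (Nat.add_sub_cancel' (ha i)).symm)).choose_spec.2 (μ, ν) ⟨h, hdμ, ?_, hc⟩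
  rw [← hc, Λ.d_comp, hdμ]
  funext i
  simp only [Pi.add_apply, Pi.sub_apply]
  omega

/-- `seg Λ lam a b` is the segment `lam(a, b)` of the path `lam`. -/
noncomputable def seg (Λ : KGraph k) (lam : Λ.Path) (a b : Fin k → ℕ)
    (hab : a ≤ b) (hb : b ≤ Λ.d lam) : Λ.Path :=
  (Λ.split (Λ.split lam b hb).1 a
    (le_of_le_of_eq hab (Λ.split_spec lam b hb).choose_spec.1.symm)).2

theorem seg_exists (Λ : KGraph k) (lam : Λ.Path) (a b : Fin k → ℕ)
    (hab : a ≤ b) (hb : b ≤ Λ.d lam) :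
    ∃ (π τ : Λ.Path) (h1 : Λ.s π = Λ.r (Λ.seg lam a b hab hb))
      (h2 : Λ.s (Λ.comp π (Λ.seg lam a b hab hb) h1) = Λ.r τ),
      Λ.d π = a ∧ Λ.d τ = Λ.d lam - b ∧
        Λ.comp (Λ.comp π (Λ.seg lam a b hab hb) h1) τ h2 = lam := by
  obtain ⟨H1, hd1, hd2, hc1⟩ := Λ.split_spec lam b hb
  obtain ⟨H2, hd1', hd2', hc2⟩ := Λ.split_spec (Λ.split lam b hb).1 a
    (le_of_le_of_eq hab (Λ.split_spec lam b hb).choose_spec.1.symm)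
  refine ⟨(Λ.split (Λ.split lam b hb).1 a
      (le_of_le_of_eq hab (Λ.split_spec lam b hb).choose_spec.1.symm)).1,
    (Λ.split lam b hb).2, H2, ?_, hd1', hd2, ?_⟩
  · show Λ.s (Λ.comp _ (Λ.split (Λ.split lam b hb).1 a
        (le_of_le_of_eq hab (Λ.split_spec lam b hb).choose_spec.1.symm)).2 H2) = _
    rw [hc2]; exact H1
  · exact (Λ.comp_congr hc2 rfl _ H1).trans hc1

theorem seg_d (Λ : KGraph k) (lam : Λ.Path) (a b : Fin k → ℕ)
    (hab : a ≤ b) (hb : b ≤ Λ.d lam) :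
    Λ.d (Λ.seg lam a b hab hb) = b - a := by
  obtain ⟨π, τ, h1, h2, hdπ, hdτ, hc⟩ := Λ.seg_exists lam a b hab hb
  have hd := congrArg Λ.d hc
  rw [Λ.d_comp, Λ.d_comp, hdπ, hdτ] at hd
  funext i
  have h0 := congrFun hd i
  simp only [Pi.add_apply, Pi.sub_apply] at h0
  simp only [Pi.sub_apply]
  have hi : a i ≤ b i := hab i
  have hi2 : b i ≤ Λ.d lam i := hb i
  omega

theorem seg_spec (Λ : KGraph k) {lam π δ τ : Λ.Path} {a b : Fin k → ℕ}
    (hab : a ≤ b) (hb : b ≤ Λ.d lam)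
    (h1 : Λ.s π = Λ.r δ) (h2 : Λ.s (Λ.comp π δ h1) = Λ.r τ)
    (hπ : Λ.d π = a) (hδ : Λ.d δ = b - a)
    (heq : Λ.comp (Λ.comp π δ h1) τ h2 = lam) :
    Λ.seg lam a b hab hb = δ := by
  have hdb : Λ.d (Λ.comp π δ h1) = b := by
    rw [Λ.d_comp, hπ, hδ]
    funext i
    simp only [Pi.add_apply, Pi.sub_apply]
    have hi : a i ≤ b i := hab i
    omega
  have e1 : (Λ.comp π δ h1, τ) = Λ.split lam b hb := Λ.split_unique b hb h2 hdb heq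
  have e1' : Λ.comp π δ h1 = (Λ.split lam b hb).1 := congrArg Prod.fst e1
  have e2 : (π, δ) = Λ.split (Λ.split lam b hb).1 a
      (le_of_le_of_eq hab (Λ.split_spec lam b hb).choose_spec.1.symm) :=
    Λ.split_unique a _ h1 hπ e1'
  exact (congrArg Prod.snd e2).symm

theorem seg_congr' (Λ : KGraph k) {lam lam' : Λ.Path} (h : lam = lam') {a b : Fin k → ℕ}
    (hab : a ≤ b) (hb : b ≤ Λ.d lam) (hb' : b ≤ Λ.d lam') :
    Λ.seg lam a b hab hb = Λ.seg lam' a b hab hb' := by subst h; rfl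

theorem seg_comp_right (Λ : KGraph k) {lam τ : Λ.Path} (h : Λ.s lam = Λ.r τ)
    {a b : Fin k → ℕ} (hab : a ≤ b) (hb : b ≤ Λ.d lam)
    (hb' : b ≤ Λ.d (Λ.comp lam τ h)) :
    Λ.seg (Λ.comp lam τ h) a b hab hb' = Λ.seg lam a b hab hb := by
  obtain ⟨π, τ₀, h1, h2, hdπ, hdτ₀, hcomp⟩ := Λ.seg_exists lam a b hab hb
  have hs : Λ.s τ₀ = Λ.r τ := by rw [← h, ← hcomp, Λ.s_comp]
  have h2' : Λ.s (Λ.comp π (Λ.seg lam a b hab hb) h1) = Λ.r (Λ.comp τ₀ τ hs) := by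
    rw [Λ.r_comp]; exact h2
  have h3 : Λ.s (Λ.comp (Λ.comp π (Λ.seg lam a b hab hb) h1) τ₀ h2) = Λ.r τ := by
    rw [Λ.s_comp]; exact hs
  have key : Λ.comp (Λ.comp π (Λ.seg lam a b hab hb) h1) (Λ.comp τ₀ τ hs) h2'
      = Λ.comp lam τ h :=
    calc Λ.comp (Λ.comp π (Λ.seg lam a b hab hb) h1) (Λ.comp τ₀ τ hs) h2'
        = Λ.comp (Λ.comp (Λ.comp π (Λ.seg lam a b hab hb) h1) τ₀ h2) τ h3 :=
          (Λ.assoc _ τ₀ τ h2 hs h3 h2').symm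
      _ = Λ.comp lam τ h := Λ.comp_congr hcomp rfl h3 h
  exact Λ.seg_spec hab hb' h1 h2' hdπ (Λ.seg_d lam a b hab hb) key

theorem r_seg (Λ : KGraph k) (lam : Λ.Path) (a b : Fin k → ℕ)
    (hab : a ≤ b) (hb : b ≤ Λ.d lam) :
    Λ.r (Λ.seg lam a b hab hb) = Λ.seg lam a a le_rfl (le_trans hab hb) := by
  obtain ⟨π, τ, h1, h2, hdπ, hdτ, hc⟩ := Λ.seg_exists lam a b hab hb
  have hv : Λ.d (Λ.s π) = 0 := Λ.d_s π
  have h1' : Λ.s π = Λ.r (Λ.s π) := (Λ.r_vertex _ hv).symm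
  have e : Λ.comp π (Λ.s π) h1' = π := Λ.comp_id π h1'
  have hδτ : Λ.s (Λ.seg lam a b hab hb) = Λ.r τ := by rw [← h2, Λ.s_comp]
  have h2'' : Λ.s π = Λ.r (Λ.comp (Λ.seg lam a b hab hb) τ hδτ) := by
    rw [Λ.r_comp]; exact h1
  have h2' : Λ.s (Λ.comp π (Λ.s π) h1') = Λ.r (Λ.comp (Λ.seg lam a b hab hb) τ hδτ) := by
    rw [e]; exact h2''
  have hcc : Λ.comp (Λ.comp π (Λ.s π) h1') (Λ.comp (Λ.seg lam a b hab hb) τ hδτ) h2' = lam :=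
    calc Λ.comp (Λ.comp π (Λ.s π) h1') (Λ.comp (Λ.seg lam a b hab hb) τ hδτ) h2'
        = Λ.comp π (Λ.comp (Λ.seg lam a b hab hb) τ hδτ) h2'' := Λ.comp_congr e rfl h2' h2''
      _ = Λ.comp (Λ.comp π (Λ.seg lam a b hab hb) h1) τ h2 :=
          (Λ.assoc π _ τ h1 hδτ h2 h2'').symm
      _ = lam := hc
  have hfin := Λ.seg_spec le_rfl (le_trans hab hb) h1' h2' hdπ
    (hv.trans (funext fun i => (Nat.sub_self (a i)).symm)) hcc
  rw [hfin]
  exact h1.symm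

theorem s_seg (Λ : KGraph k) (lam : Λ.Path) (a b : Fin k → ℕ)
    (hab : a ≤ b) (hb : b ≤ Λ.d lam) :
    Λ.s (Λ.seg lam a b hab hb) = Λ.seg lam b b le_rfl hb := by
  obtain ⟨π, τ, h1, h2, hdπ, hdτ, hc⟩ := Λ.seg_exists lam a b hab hb
  set δ := Λ.seg lam a b hab hb with hδdef
  have hsX : Λ.s (Λ.comp π δ h1) = Λ.s δ := Λ.s_comp π δ h1
  have hX' : Λ.s (Λ.comp π δ h1) = Λ.r (Λ.s (Λ.comp π δ h1)) :=
    (Λ.r_vertex _ (Λ.d_s _)).symm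
  have h1' : Λ.s (Λ.comp π δ h1) = Λ.r (Λ.s δ) := by
    rw [hsX]; exact (Λ.r_vertex _ (Λ.d_s δ)).symm
  have e : Λ.comp (Λ.comp π δ h1) (Λ.s δ) h1' = Λ.comp π δ h1 :=
    (Λ.comp_congr rfl hsX.symm h1' hX').trans (Λ.comp_id _ hX')
  have h2' : Λ.s (Λ.comp (Λ.comp π δ h1) (Λ.s δ) h1') = Λ.r τ := by rw [e]; exact h2
  have hcc : Λ.comp (Λ.comp (Λ.comp π δ h1) (Λ.s δ) h1') τ h2' = lam :=
    (Λ.comp_congr e rfl h2' h2).trans hc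
  have hdX : Λ.d (Λ.comp π δ h1) = b := by
    rw [Λ.d_comp, hdπ, hδdef, Λ.seg_d]
    funext i
    simp only [Pi.add_apply, Pi.sub_apply]
    have hi : a i ≤ b i := hab i
    omega
  have hdv : Λ.d (Λ.s δ) = b - b :=
    (Λ.d_s δ).trans (funext fun i => (Nat.sub_self (b i)).symm)
  exact (Λ.seg_spec le_rfl hb h1' h2' hdX hdv hcc).symm

theorem seg_glue (Λ : KGraph k) (lam : Λ.Path) {a b c : Fin k → ℕ}
    (hab : a ≤ b) (hbc : b ≤ c) (hc : c ≤ Λ.d lam)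
    (H : Λ.s (Λ.seg lam a b hab (hbc.trans hc)) = Λ.r (Λ.seg lam b c hbc hc)) :
    Λ.comp (Λ.seg lam a b hab (hbc.trans hc)) (Λ.seg lam b c hbc hc) H
      = Λ.seg lam a c (hab.trans hbc) hc := by
  set Δ := Λ.seg lam a c (hab.trans hbc) hc with hΔdef
  obtain ⟨π, τ, h1, h2, hdπ, hdτ, hcomp⟩ := Λ.seg_exists lam a c (hab.trans hbc) hc
  have hdΔ : Λ.d Δ = c - a := Λ.seg_d lam a c _ _
  have hba : b - a ≤ Λ.d Δ := by
    rw [hdΔ, Pi.le_def]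
    intro i
    simp only [Pi.sub_apply]
    have hi : b i ≤ c i := hbc i
    omega
  obtain ⟨π', τ', h1', h2', hdπ', hdτ', hcomp'⟩ := Λ.seg_exists Δ 0 (b - a) zero_le hba
  set s1 := Λ.seg Δ 0 (b - a) zero_le hba with hs1def
  have e0 : Λ.comp π' s1 h1' = s1 := Λ.vertex_comp hdπ' h1'
  have hsτ : Λ.s s1 = Λ.r τ' := (Λ.s_comp π' s1 h1').symm.trans h2'
  have hΔeq : Λ.comp s1 τ' hsτ = Δ :=
    ((Λ.comp_congr e0.symm rfl hsτ h2').trans hcomp')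
  have hds1 : Λ.d s1 = b - a := (Λ.seg_d Δ 0 (b - a) _ _).trans (tsub_zero _)
  have hdτ'c : Λ.d τ' = c - b := by
    rw [hdτ', hdΔ]
    funext i
    simp only [Pi.sub_apply]
    have hi : a i ≤ b i := hab i
    have hi2 : b i ≤ c i := hbc i
    omega
  have hπs1 : Λ.s π = Λ.r s1 := h1.trans (by rw [← hΔdef, ← hΔeq, Λ.r_comp])
  have hsΔτ : Λ.s Δ = Λ.r τ := (Λ.s_comp π Δ h1).symm.trans h2
  have hττ : Λ.s τ' = Λ.r τ := by
    rw [show Λ.s τ' = Λ.s Δ by rw [← hΔeq, Λ.s_comp]]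
    exact hsΔτ
  have h2c : Λ.s (Λ.comp π s1 hπs1) = Λ.r (Λ.comp τ' τ hττ) := by
    rw [Λ.s_comp, Λ.r_comp]; exact hsτ
  have A1 : Λ.s s1 = Λ.r (Λ.comp τ' τ hττ) := by rw [Λ.r_comp]; exact hsτ
  have A2 : Λ.s π = Λ.r (Λ.comp s1 (Λ.comp τ' τ hττ) A1) := by
    rw [Λ.r_comp]; exact hπs1
  have A3 : Λ.s π = Λ.r (Λ.comp Δ τ hsΔτ) := by rw [Λ.r_comp]; exact h1
  have h3 : Λ.s (Λ.comp s1 τ' hsτ) = Λ.r τ := by rw [Λ.s_comp]; exact hττ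
  have B1 : Λ.comp s1 (Λ.comp τ' τ hττ) A1 = Λ.comp Δ τ hsΔτ :=
    calc Λ.comp s1 (Λ.comp τ' τ hττ) A1
        = Λ.comp (Λ.comp s1 τ' hsτ) τ h3 := (Λ.assoc s1 τ' τ hsτ hττ h3 A1).symm
      _ = Λ.comp Δ τ hsΔτ := Λ.comp_congr hΔeq rfl h3 hsΔτ
  have hcc1 : Λ.comp (Λ.comp π s1 hπs1) (Λ.comp τ' τ hττ) h2c = lam :=
    calc Λ.comp (Λ.comp π s1 hπs1) (Λ.comp τ' τ hττ) h2c
        = Λ.comp π (Λ.comp s1 (Λ.comp τ' τ hττ) A1) A2 :=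
          Λ.assoc π s1 _ hπs1 A1 h2c A2
      _ = Λ.comp π (Λ.comp Δ τ hsΔτ) A3 := Λ.comp_congr rfl B1 A2 A3
      _ = Λ.comp (Λ.comp π Δ h1) τ h2 := (Λ.assoc π Δ τ h1 hsΔτ h2 A3).symm
      _ = lam := hcomp
  have claim1 : Λ.seg lam a b hab (hbc.trans hc) = s1 :=
    Λ.seg_spec hab (hbc.trans hc) hπs1 h2c hdπ hds1 hcc1
  have hdY : Λ.d (Λ.comp π s1 hπs1) = b := by
    rw [Λ.d_comp, hdπ, hds1]
    funext i
    simp only [Pi.add_apply, Pi.sub_apply]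
    have hi : a i ≤ b i := hab i
    omega
  have hYτ' : Λ.s (Λ.comp π s1 hπs1) = Λ.r τ' := by rw [Λ.s_comp]; exact hsτ
  have h2d : Λ.s (Λ.comp (Λ.comp π s1 hπs1) τ' hYτ') = Λ.r τ := by
    rw [Λ.s_comp]; exact hττ
  have hcc2 : Λ.comp (Λ.comp (Λ.comp π s1 hπs1) τ' hYτ') τ h2d = lam :=
    (Λ.assoc (Λ.comp π s1 hπs1) τ' τ hYτ' hττ h2d h2c).trans hcc1
  have claim2 : Λ.seg lam b c hbc hc = τ' :=
    Λ.seg_spec hbc hc hYτ' h2d hdY hdτ'c hcc2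
  exact (Λ.comp_congr claim1 claim2 H hsτ).trans hΔeq

end KGraph

end ThetaAux
section ThetaAux2

namespace KGraph

variable {k : ℕ}

theorem extW_pf (Λ : KGraph k) (lam : Λ.Path) (x : InfinitePath Λ) (hx : Λ.s lam = x.range)
    (u : Fin k → ℕ) : Λ.s lam = Λ.r (x.toFun 0 u zero_le) := by
  rw [x.rng]; exact hx

/-- `extW Λ lam x hx u` is the finite path `lam · x(0,u)`. -/
noncomputable def extW (Λ : KGraph k) (lam : Λ.Path) (x : InfinitePath Λ)
    (hx : Λ.s lam = x.range) (u : Fin k → ℕ) : Λ.Path :=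
  Λ.comp lam (x.toFun 0 u zero_le) (Λ.extW_pf lam x hx u)

theorem d_extW (Λ : KGraph k) (lam : Λ.Path) (x : InfinitePath Λ) (hx : Λ.s lam = x.range)
    (u : Fin k → ℕ) : Λ.d (Λ.extW lam x hx u) = Λ.d lam + u := by
  unfold extW
  rw [Λ.d_comp, x.d_eq, tsub_zero]

theorem extW_comp (Λ : KGraph k) (lam : Λ.Path) (x : InfinitePath Λ) (hx : Λ.s lam = x.range)
    {u v : Fin k → ℕ} (huv : u ≤ v)
    (hc : Λ.s (Λ.extW lam x hx u) = Λ.r (x.toFun u v huv)) :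
    Λ.extW lam x hx v = Λ.comp (Λ.extW lam x hx u) (x.toFun u v huv) hc := by
  have hs : Λ.s (x.toFun 0 u zero_le) = Λ.r (x.toFun u v huv) := by
    rw [x.src, x.rng]
  have h4 : Λ.s lam = Λ.r (Λ.comp (x.toFun 0 u zero_le) (x.toFun u v huv) hs) := by
    rw [Λ.r_comp]; exact Λ.extW_pf lam x hx u
  have base := Λ.assoc lam (x.toFun 0 u zero_le) (x.toFun u v huv)
    (Λ.extW_pf lam x hx u) hs hc h4
  calc Λ.extW lam x hx v
      = Λ.comp lam (Λ.comp (x.toFun 0 u zero_le) (x.toFun u v huv) hs) h4 :=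
        Λ.comp_congr rfl (x.comp_eq 0 u v zero_le huv hs).symm (Λ.extW_pf lam x hx v) h4
    _ = Λ.comp (Λ.extW lam x hx u) (x.toFun u v huv) hc := base.symm

theorem seg_extW_mono (Λ : KGraph k) (lam : Λ.Path) (x : InfinitePath Λ)
    (hx : Λ.s lam = x.range) {u v a b : Fin k → ℕ} (huv : u ≤ v) (hab : a ≤ b)
    (hbu : b ≤ Λ.d (Λ.extW lam x hx u)) (hbv : b ≤ Λ.d (Λ.extW lam x hx v)) :
    Λ.seg (Λ.extW lam x hx v) a b hab hbv = Λ.seg (Λ.extW lam x hx u) a b hab hbu := by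
  have h1 : Λ.s (Λ.extW lam x hx u) = Λ.r (x.toFun u v huv) := by
    unfold extW
    rw [Λ.s_comp, x.src, x.rng]
  have e := Λ.extW_comp lam x hx huv h1
  have hbc : b ≤ Λ.d (Λ.comp (Λ.extW lam x hx u) (x.toFun u v huv) h1) := by
    rw [← e]; exact hbv
  exact (Λ.seg_congr' e hab hbv hbc).trans (Λ.seg_comp_right h1 hab hbu hbc)

/-- The infinite path `lam · x`. -/
noncomputable def ext (Λ : KGraph k) (lam : Λ.Path) (x : InfinitePath Λ)
    (hx : Λ.s lam = x.range) : InfinitePath Λ where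
  toFun p q h := Λ.seg (Λ.extW lam x hx (q - Λ.d lam)) p q h
    (by
      rw [Λ.d_extW, Pi.le_def]
      intro i
      simp only [Pi.add_apply, Pi.sub_apply]
      omega)
  d_eq p q h := Λ.seg_d _ p q _ _
  src p q h := Λ.s_seg _ p q _ _
  rng p q h :=
    (Λ.r_seg _ p q h _).trans
      (Λ.seg_extW_mono lam x hx (u := p - Λ.d lam) (v := q - Λ.d lam)
        (by rw [Pi.le_def]; intro i; simp only [Pi.sub_apply];
            have hi : p i ≤ q i := h i; omega)
        le_rfl
        (by rw [Λ.d_extW, Pi.le_def]; intro i;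
            simp only [Pi.add_apply, Pi.sub_apply]; omega)
        (by rw [Λ.d_extW, Pi.le_def]; intro i;
            simp only [Pi.add_apply, Pi.sub_apply];
            have hi : p i ≤ q i := h i; omega))
  comp_eq p q t h1 h2 hc := by
    have hqt : q - Λ.d lam ≤ t - Λ.d lam := by
      rw [Pi.le_def]
      intro i
      simp only [Pi.sub_apply]
      have hi : q i ≤ t i := h2 i
      omega
    have hbt : q ≤ Λ.d (Λ.extW lam x hx (t - Λ.d lam)) := by
      rw [Λ.d_extW, Pi.le_def]
      intro i
      simp only [Pi.add_apply, Pi.sub_apply]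
      have hi : q i ≤ t i := h2 i
      omega
    have hbq : q ≤ Λ.d (Λ.extW lam x hx (q - Λ.d lam)) := by
      rw [Λ.d_extW, Pi.le_def]
      intro i
      simp only [Pi.add_apply, Pi.sub_apply]
      omega
    have ht : t ≤ Λ.d (Λ.extW lam x hx (t - Λ.d lam)) := by
      rw [Λ.d_extW, Pi.le_def]
      intro i
      simp only [Pi.add_apply, Pi.sub_apply]
      omega
    have e1 : Λ.seg (Λ.extW lam x hx (q - Λ.d lam)) p q h1 hbq
        = Λ.seg (Λ.extW lam x hx (t - Λ.d lam)) p q h1 hbt :=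
      (Λ.seg_extW_mono lam x hx hqt h1 hbq hbt).symm
    have H : Λ.s (Λ.seg (Λ.extW lam x hx (t - Λ.d lam)) p q h1 hbt)
        = Λ.r (Λ.seg (Λ.extW lam x hx (t - Λ.d lam)) q t h2 ht) := by
      rw [Λ.s_seg, Λ.r_seg]
    calc Λ.comp (Λ.seg (Λ.extW lam x hx (q - Λ.d lam)) p q h1 hbq)
          (Λ.seg (Λ.extW lam x hx (t - Λ.d lam)) q t h2 ht) hc
        = Λ.comp (Λ.seg (Λ.extW lam x hx (t - Λ.d lam)) p q h1 hbt)
          (Λ.seg (Λ.extW lam x hx (t - Λ.d lam)) q t h2 ht) H :=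
          Λ.comp_congr e1 rfl hc H
      _ = Λ.seg (Λ.extW lam x hx (t - Λ.d lam)) p t (h1.trans h2) ht :=
          Λ.seg_glue _ h1 h2 ht H

theorem ext_head (Λ : KGraph k) (lam : Λ.Path) (x : InfinitePath Λ)
    (hx : Λ.s lam = x.range) :
    (Λ.ext lam x hx).toFun 0 (Λ.d lam) zero_le = lam := by
  show Λ.seg (Λ.extW lam x hx (Λ.d lam - Λ.d lam)) 0 (Λ.d lam) zero_le _ = lam
  have h1 : Λ.s (Λ.r lam) = Λ.r lam := Λ.s_vertex _ (Λ.d_r lam)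
  have e : Λ.comp (Λ.r lam) lam h1 = lam := Λ.id_comp lam h1
  have h2 : Λ.s (Λ.comp (Λ.r lam) lam h1)
      = Λ.r (x.toFun 0 (Λ.d lam - Λ.d lam) zero_le) := by
    rw [e]; exact Λ.extW_pf lam x hx _
  exact Λ.seg_spec zero_le
    (by rw [Λ.d_extW, Pi.le_def]; intro i;
        simp only [Pi.add_apply, Pi.sub_apply]; omega)
    h1 h2 (Λ.d_r lam) (tsub_zero _).symm
    (Λ.comp_congr e rfl h2 (Λ.extW_pf lam x hx _))

theorem ext_shift (Λ : KGraph k) (lam : Λ.Path) (x : InfinitePath Λ)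
    (hx : Λ.s lam = x.range) :
    (Λ.ext lam x hx).shift (Λ.d lam) = x := by
  apply InfinitePath.ext'
  funext p q h
  have hu : Λ.d lam + q - Λ.d lam = q := by
    funext i
    simp only [Pi.add_apply, Pi.sub_apply]
    omega
  have hWq : Λ.d lam + q ≤ Λ.d (Λ.extW lam x hx q) := (Λ.d_extW lam x hx q).ge
  have hpq : Λ.d lam + p ≤ Λ.d lam + q := add_le_add le_rfl h
  have hbig : Λ.d lam + q ≤ Λ.d (Λ.extW lam x hx (Λ.d lam + q - Λ.d lam)) := by
    rw [Λ.d_extW, Pi.le_def]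
    intro i
    simp only [Pi.add_apply, Pi.sub_apply]
    omega
  show Λ.seg (Λ.extW lam x hx (Λ.d lam + q - Λ.d lam)) (Λ.d lam + p) (Λ.d lam + q) hpq hbig
      = x.toFun p q h
  have step1 : Λ.seg (Λ.extW lam x hx (Λ.d lam + q - Λ.d lam))
        (Λ.d lam + p) (Λ.d lam + q) hpq hbig
      = Λ.seg (Λ.extW lam x hx q) (Λ.d lam + p) (Λ.d lam + q) hpq hWq :=
    Λ.seg_congr' (congrArg (Λ.extW lam x hx) hu) hpq hbig hWq
  refine step1.trans ?_
  -- now show seg (extW q) (c+p) (c+q) = x(p,q)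
  have h1 : Λ.s (Λ.extW lam x hx p) = Λ.r (x.toFun p q h) := by
    unfold extW
    rw [Λ.s_comp, x.src, x.rng]
  have e := Λ.extW_comp lam x hx h h1
  have h2 : Λ.s (Λ.comp (Λ.extW lam x hx p) (x.toFun p q h) h1)
      = Λ.r (Λ.s (x.toFun p q h)) := by
    rw [Λ.s_comp]
    exact (Λ.r_vertex _ (Λ.d_s _)).symm
  have hcc : Λ.comp (Λ.comp (Λ.extW lam x hx p) (x.toFun p q h) h1)
      (Λ.s (x.toFun p q h)) h2 = Λ.extW lam x hx q := by
    rw [Λ.comp_vertex (Λ.d_s _) h2]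
    exact e.symm
  have hδ : Λ.d (x.toFun p q h) = Λ.d lam + q - (Λ.d lam + p) := by
    rw [x.d_eq]
    funext i
    simp only [Pi.add_apply, Pi.sub_apply]
    omega
  exact Λ.seg_spec hpq hWq h1 h2 (Λ.d_extW lam x hx p) hδ hcc

theorem extEq_ext (Λ : KGraph k) (lam : Λ.Path) (x : InfinitePath Λ)
    (hx : Λ.s lam = x.range) : Λ.ExtEq lam (Λ.ext lam x hx) x :=
  ⟨Λ.ext_head lam x hx, Λ.ext_shift lam x hx⟩

theorem ext_range (Λ : KGraph k) (lam : Λ.Path) (x : InfinitePath Λ)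
    (hx : Λ.s lam = x.range) : (Λ.ext lam x hx).range = Λ.r lam := by
  have h := (Λ.ext lam x hx).rng 0 (Λ.d lam) zero_le
  rw [Λ.ext_head] at h
  exact h.symm

theorem range_of_extEq (Λ : KGraph k) {lam : Λ.Path} {y x : InfinitePath Λ}
    (h : Λ.ExtEq lam y x) : y.range = Λ.r lam := by
  have h2 := y.rng 0 (Λ.d lam) zero_le
  rw [h.1] at h2
  exact h2.symm

theorem extEq_comp (Λ : KGraph k) {lam τ : Λ.Path} (h : Λ.s lam = Λ.r τ)
    {z y x : InfinitePath Λ} (hzy : Λ.ExtEq lam z y) (hyx : Λ.ExtEq τ y x) :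
    Λ.ExtEq (Λ.comp lam τ h) z x := by
  obtain ⟨hz1, hz2⟩ := hzy
  obtain ⟨hy1, hy2⟩ := hyx
  have hd := Λ.d_comp lam τ h
  have hmid : Λ.d lam ≤ Λ.d lam + Λ.d τ := le_self_add
  have e3 : z.toFun (Λ.d lam) (Λ.d lam + Λ.d τ) hmid = τ := by
    have e4 : (z.shift (Λ.d lam)).toFun 0 (Λ.d τ) zero_le = τ := by
      rw [hz2]; exact hy1
    exact (z.toFun_congr (add_zero _).symm rfl hmid (by exact add_le_add le_rfl zero_le)).trans e4
  have hc : Λ.s (z.toFun 0 (Λ.d lam) zero_le)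
      = Λ.r (z.toFun (Λ.d lam) (Λ.d lam + Λ.d τ) hmid) :=
    (z.src 0 (Λ.d lam) zero_le).trans (z.rng (Λ.d lam) (Λ.d lam + Λ.d τ) hmid).symm
  constructor
  · refine (z.toFun_congr rfl hd zero_le zero_le).trans ?_
    refine (z.comp_eq 0 (Λ.d lam) (Λ.d lam + Λ.d τ) zero_le hmid hc).symm.trans ?_
    exact Λ.comp_congr hz1 e3 hc h
  · rw [hd, ← InfinitePath.shift_shift, hz2]
    exact hy2

end KGraph

end ThetaAux2
/-- For `m − n ∈ Per Λ` and `μ ∈ Λ^m`: `θ_{d(α)+m, d(α)+n}(αμ) = α·θ_{m,n}(μ)` for all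
`α` with `s(α) = r(μ)`, and `θ_{m+d(β), n+d(β)}(μβ) = θ_{m,n}(μ)·β` for all `β` with
`r(β) = s(μ)`. -/
theorem theta_extension {k : ℕ} (Λ : KGraph k)
    (hfin : Λ.IsFinite) (hsc : Λ.StronglyConnected)
    (m n : Fin k → ℕ) (hmn : (fun i => (m i : ℤ) - n i) ∈ Λ.Per)
    (μ : Λ.Path) (hμ : Λ.d μ = m) :
    ∀ ν : Λ.Path, Λ.IsTheta m n μ ν →
      (∀ α : Λ.Path, ∀ (h1 : Λ.s α = Λ.r μ) (h2 : Λ.s α = Λ.r ν),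
        Λ.IsTheta (Λ.d α + m) (Λ.d α + n) (Λ.comp α μ h1) (Λ.comp α ν h2)) ∧
      (∀ β : Λ.Path, ∀ (h1 : Λ.s μ = Λ.r β) (h2 : Λ.s ν = Λ.r β),
        Λ.IsTheta (m + Λ.d β) (n + Λ.d β) (Λ.comp μ β h1) (Λ.comp ν β h2)) := by
  rintro ν ⟨hdμ2, hdν, hmain⟩
  constructor
  · intro α h1 h2
    refine ⟨by rw [Λ.d_comp, hμ], by rw [Λ.d_comp, hdν], ?_⟩
    intro x hx
    obtain ⟨y, hyμ, hyν⟩ := hmain x (hx.trans (Λ.s_comp α μ h1))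
    have hyr : y.range = Λ.r μ := Λ.range_of_extEq hyμ
    have hα : Λ.s α = y.range := h1.trans hyr.symm
    exact ⟨Λ.ext α y hα, Λ.extEq_comp h1 (Λ.extEq_ext α y hα) hyμ,
      Λ.extEq_comp h2 (Λ.extEq_ext α y hα) hyν⟩
  · intro β h1 h2
    refine ⟨by rw [Λ.d_comp, hμ], by rw [Λ.d_comp, hdν], ?_⟩
    intro x hx
    have hβ : Λ.s β = x.range := (hx.trans (Λ.s_comp μ β h1)).symm
    obtain ⟨w, hwμ, hwν⟩ := hmain (Λ.ext β x hβ) ((Λ.ext_range β x hβ).trans h1.symm)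
    exact ⟨w, Λ.extEq_comp h1 hwμ (Λ.extEq_ext β x hβ),
      Λ.extEq_comp h2 hwν (Λ.extEq_ext β x hβ)⟩
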